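/- Let ζ ∈ ℂ be a complex number that is not a Gaussian rational. Set c₀ := [ζ] and z := ζ - c₀ ∈ 𝔉. Then T^{n}(z) ≠ 0 for every n ≥ 0, so the HCF partial quotients c_n := a_n(z) are defined for all n ≥ 1; let (p_n, q_n) be the continuant sequences of (c₀, c₁, c₂, ...). Then for every n ≥ 1, q_n ≠ 0 and (2/(2+√2)) · 1/(|q_n|²·(|c_{n+1}| + √2/2)) ≤ |ζ - p_n/q_n| ≤ (4/(2-√2)) · 1/(|c_{n+1}|·|q_n|²). -/

import Mathlib

open Complex

/-- The nearest Gaussian integer to a complex number, as a complex number. -/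
noncomputable def nearestGaussian (z : ℂ) : ℂ :=
  (⌊z.re + 1 / 2⌋ : ℤ) + (⌊z.im + 1 / 2⌋ : ℤ) * I

/-- The complex Gauss map on the fundamental domain. -/
noncomputable def gaussT (z : ℂ) : ℂ :=
  if z = 0 then 0 else z⁻¹ - nearestGaussian z⁻¹

/-- A Gaussian rational is a quotient of two Gaussian integers. -/
def IsGaussianRational (z : ℂ) : Prop :=
  ∃ p q : GaussianInt, q ≠ 0 ∧ z = (p : ℂ) / (q : ℂ)

/-- Continuant numerators: `contNum c (j+1)` is `p_j`, with `contNum c 0 = p_{-1} = 1`. -/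
noncomputable def contNum (c : ℕ → ℂ) : ℕ → ℂ
  | 0 => 1
  | 1 => c 0
  | n + 2 => c (n + 1) * contNum c (n + 1) + contNum c n

/-- Continuant denominators: `contDen c (j+1)` is `q_j`, with `contDen c 0 = q_{-1} = 0`. -/
noncomputable def contDen (c : ℕ → ℂ) : ℕ → ℂ
  | 0 => 0
  | 1 => 1
  | n + 2 => c (n + 1) * contDen c (n + 1) + contDen c n

/-! ### Auxiliary lemmas -/

lemma hcf_intmul_re (a b : ℤ) (z : ℂ) :
    (((a:ℂ) + (b:ℂ)*I) * z).re = a * z.re - b * z.im := by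
  simp [Complex.mul_re]

lemma hcf_normSq_intc (a b : ℤ) :
    Complex.normSq ((a:ℂ) + (b:ℂ)*I) = (a:ℝ)^2 + (b:ℝ)^2 := by
  simp [Complex.normSq_apply]; ring

lemma hcf_ng_exists (w : ℂ) : ∃ g : GaussianInt, (g : ℂ) = nearestGaussian w :=
  ⟨⟨⌊w.re + 1/2⌋, ⌊w.im + 1/2⌋⟩, by simp [GaussianInt.toComplex_def, nearestGaussian]⟩

lemma hcf_ng_int (w : ℂ) : ∃ a b : ℤ, nearestGaussian w = (a:ℂ) + (b:ℂ)*I :=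
  ⟨⌊w.re + 1/2⌋, ⌊w.im + 1/2⌋, rfl⟩

lemma hcf_igr_zero : IsGaussianRational 0 := ⟨0, 1, one_ne_zero, by simp⟩

lemma hcf_igr_add (w : ℂ) (hw : IsGaussianRational w) (g : GaussianInt) :
    IsGaussianRational (w + (g : ℂ)) := by
  obtain ⟨p, q, hq, rfl⟩ := hw
  refine ⟨p + g * q, q, hq, ?_⟩
  have hq' : (q : ℂ) ≠ 0 := by simpa [GaussianInt.toComplex_eq_zero] using hq
  push_cast [GaussianInt.toComplex_add, GaussianInt.toComplex_mul]
  field_simp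

lemma hcf_igr_inv (w : ℂ) (hw : IsGaussianRational w) : IsGaussianRational w⁻¹ := by
  obtain ⟨p, q, hq, rfl⟩ := hw
  by_cases hp : (p : ℂ) = 0
  · simp [hp, hcf_igr_zero]
  · exact ⟨q, p, by simpa [GaussianInt.toComplex_eq_zero] using hp, by rw [inv_div]⟩

lemma hcf_igr_gaussT (w : ℂ) (hw : IsGaussianRational (gaussT w)) : IsGaussianRational w := by
  by_cases h0 : w = 0
  · rw [h0]; exact hcf_igr_zero
  · have hT : gaussT w = w⁻¹ - nearestGaussian w⁻¹ := if_neg h0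
    obtain ⟨g, hg⟩ := hcf_ng_exists w⁻¹
    have h1 : IsGaussianRational (w⁻¹) := by
      have := hcf_igr_add _ hw g
      rw [hg, hT] at this
      simpa using this
    have := hcf_igr_inv _ h1
    rwa [inv_inv] at this

/-- Membership in the fundamental domain. -/
structure HcfInF (u : ℂ) : Prop where
  re_lb : -(1/2) ≤ u.re
  re_ub : u.re < 1/2
  im_lb : -(1/2) ≤ u.im
  im_ub : u.im < 1/2

lemma hcf_ng_re (w : ℂ) : (nearestGaussian w).re = ⌊w.re + 1/2⌋ := by simp [nearestGaussian]
lemma hcf_ng_im (w : ℂ) : (nearestGaussian w).im = ⌊w.im + 1/2⌋ := by simp [nearestGaussian]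

lemma hcf_inF_sub_ng (w : ℂ) : HcfInF (w - nearestGaussian w) := by
  constructor <;> simp only [Complex.sub_re, Complex.sub_im, hcf_ng_re, hcf_ng_im]
  · have := Int.floor_le (w.re + 1/2); linarith
  · have := Int.lt_floor_add_one (w.re + 1/2); linarith
  · have := Int.floor_le (w.im + 1/2); linarith
  · have := Int.lt_floor_add_one (w.im + 1/2); linarith

lemma hcf_inF_normSq (u : ℂ) (h : HcfInF u) : Complex.normSq u ≤ 1/2 := by
  rw [Complex.normSq_apply]
  nlinarith [h.re_lb, h.re_ub, h.im_lb, h.im_ub]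

lemma hcf_inF_abs (u : ℂ) (h : HcfInF u) : ‖u‖ ≤ Real.sqrt 2 / 2 := by
  have h1 := hcf_inF_normSq u h
  have h2 := Complex.sq_norm u
  have h3 : (Real.sqrt 2 / 2)^2 = 1/2 := by
    rw [div_pow, Real.sq_sqrt (by norm_num : (2:ℝ) ≥ 0)]; norm_num
  nlinarith [norm_nonneg u, Real.sqrt_nonneg 2]

lemma hcf_inv_near_unit (z s : ℂ) (hz : z ≠ 0) (hs : Complex.normSq s = 1)
    (h : ‖z⁻¹ - s‖ < 1) : 1/2 < (s * z).re := by
  have h1 : z⁻¹ - s = (1 - s * z) / z := by field_simp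
  rw [h1, norm_div] at h
  have hza : 0 < ‖z‖ := norm_pos_iff.mpr hz
  have h2 : ‖1 - s*z‖ < ‖z‖ := by
    rw [div_lt_one hza] at h; exact h
  have h3 : Complex.normSq (1 - s*z) < Complex.normSq z := by
    rw [← Complex.sq_norm, ← Complex.sq_norm]
    exact pow_lt_pow_left₀ h2 (by positivity) two_ne_zero
  have e1 : Complex.normSq (1 - s*z) = 1 - 2*(s*z).re + Complex.normSq s * Complex.normSq z := by
    simp [Complex.normSq_apply, Complex.mul_re, Complex.mul_im, Complex.sub_re, Complex.sub_im]
    ring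
  rw [e1, hs] at h3; linarith

lemma hcf_inv_near_sqrt2 (z v : ℂ) (hz : z ≠ 0) (hv : Complex.normSq v = 2)
    (h : ‖z⁻¹ - v‖ < 1) : ‖z - (starRingEnd ℂ) v‖ < 1 := by
  have h1 : z⁻¹ - v = (1 - v * z) / z := by field_simp
  rw [h1, norm_div] at h
  have hza : 0 < ‖z‖ := norm_pos_iff.mpr hz
  have h2 : ‖1 - v*z‖ < ‖z‖ := by rw [div_lt_one hza] at h; exact h
  have h3 : Complex.normSq (1 - v*z) < Complex.normSq z := by
    rw [← Complex.sq_norm, ← Complex.sq_norm]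
    exact pow_lt_pow_left₀ h2 (by positivity) two_ne_zero
  have e1 : Complex.normSq (1 - v*z) = 1 - 2*(v*z).re + Complex.normSq v * Complex.normSq z := by
    simp [Complex.normSq_apply, Complex.mul_re, Complex.mul_im, Complex.sub_re, Complex.sub_im]
    ring
  have e2 : Complex.normSq (z - (starRingEnd ℂ) v)
      = Complex.normSq z - 2*(v*z).re + Complex.normSq v := by
    simp [Complex.normSq_apply, Complex.mul_re, Complex.mul_im, Complex.sub_re, Complex.sub_im]
    ring
  have h4 : Complex.normSq (z - (starRingEnd ℂ) v) < 1 := by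
    rw [e2, hv]; rw [e1, hv] at h3; linarith
  have h5 := Complex.sq_norm (z - (starRingEnd ℂ) v)
  nlinarith [norm_nonneg (z - (starRingEnd ℂ) v)]

lemma hcf_key_identity (A B v : ℂ) (hv : Complex.normSq v = 2) :
    Complex.normSq (A + v*B) - Complex.normSq B
      = Complex.normSq (B + (starRingEnd ℂ) v * A) - Complex.normSq A := by
  have hv' : v.re * v.re + v.im * v.im = 2 := hv
  simp only [Complex.normSq_apply, Complex.add_re, Complex.add_im, Complex.mul_re,
    Complex.mul_im, Complex.conj_re, Complex.conj_im]
  ring_nf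
  nlinarith [hv']

lemma hcf_unit_re_le (a b : ℤ) (w : ℂ) (hF : HcfInF w) (h1 : a^2 + b^2 = 1) :
    ((((a:ℂ))+((b:ℂ))*I) * w).re ≤ 1/2 := by
  rw [hcf_intmul_re]
  have ha : -1 ≤ a ∧ a ≤ 1 := by constructor <;> nlinarith [sq_nonneg a, sq_nonneg b]
  have hb : -1 ≤ b ∧ b ≤ 1 := by constructor <;> nlinarith [sq_nonneg a, sq_nonneg b]
  obtain ⟨ha1, ha2⟩ := ha; obtain ⟨hb1, hb2⟩ := hb
  interval_cases a <;> interval_cases b <;> simp_all <;>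
    push_cast <;> linarith [hF.re_lb, hF.re_ub, hF.im_lb, hF.im_ub]

set_option maxHeartbeats 2000000 in
theorem stmt6 (ζ : ℂ) (hζ : ¬ IsGaussianRational ζ)
    (c : ℕ → ℂ) (hc0 : c 0 = nearestGaussian ζ)
    (z : ℂ) (hz : z = ζ - c 0)
    (hc : ∀ n : ℕ, c (n + 1) = nearestGaussian (gaussT^[n] z)⁻¹) :
    (∀ n : ℕ, gaussT^[n] z ≠ 0) ∧
    ∀ n : ℕ, 1 ≤ n →
      contDen c (n + 1) ≠ 0 ∧
      (2 / (2 + Real.sqrt 2)) *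
          (1 / (‖contDen c (n + 1)‖ ^ 2 *
            (‖c (n + 1)‖ + Real.sqrt 2 / 2)))
        ≤ ‖ζ - contNum c (n + 1) / contDen c (n + 1)‖ ∧
      ‖ζ - contNum c (n + 1) / contDen c (n + 1)‖
        ≤ (4 / (2 - Real.sqrt 2)) *
            (1 / (‖c (n + 1)‖ * ‖contDen c (n + 1)‖ ^ 2)) := by
  -- basic constants
  have hs2 : (0:ℝ) < Real.sqrt 2 := Real.sqrt_pos.mpr (by norm_num)
  have hs2sq : Real.sqrt 2 ^ 2 = 2 := Real.sq_sqrt (by norm_num)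
  have hs2lt : Real.sqrt 2 < 2 := by nlinarith
  have hs2gt : 1 < Real.sqrt 2 := by nlinarith
  -- Part 0: non-vanishing of the orbit
  have hz0 : ∀ n : ℕ, gaussT^[n] z ≠ 0 := by
    intro n hn
    apply hζ
    have step : ∀ m : ℕ, IsGaussianRational (gaussT^[m] z) → IsGaussianRational z := by
      intro m
      induction m with
      | zero => exact fun h => h
      | succ k ih =>
        intro h
        rw [Function.iterate_succ_apply'] at h
        exact ih (hcf_igr_gaussT _ h)
    have hzr : IsGaussianRational z := step n (by rw [hn]; exact hcf_igr_zero)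
    obtain ⟨g, hg⟩ := hcf_ng_exists ζ
    have h2 := hcf_igr_add _ hzr g
    rw [hg, ← hc0, hz] at h2
    simpa using h2
  have habs_pos : ∀ n, 0 < ‖gaussT^[n] z‖ :=
    fun n => norm_pos_iff.mpr (hz0 n)
  -- fundamental domain membership
  have hF : ∀ n, HcfInF (gaussT^[n] z) := by
    intro n
    cases n with
    | zero =>
      have : z = ζ - nearestGaussian ζ := by rw [hz, hc0]
      rw [Function.iterate_zero_apply, this]
      exact hcf_inF_sub_ng ζ
    | succ k =>
      rw [Function.iterate_succ_apply', gaussT, if_neg (hz0 k)]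
      exact hcf_inF_sub_ng _
  have habs : ∀ n, ‖gaussT^[n] z‖ ≤ Real.sqrt 2 / 2 :=
    fun n => hcf_inF_abs _ (hF n)
  -- recurrence
  have hrec : ∀ n : ℕ, (gaussT^[n] z)⁻¹ = c (n+1) + gaussT^[n+1] z := by
    intro n
    rw [hc n, Function.iterate_succ_apply', gaussT, if_neg (hz0 n)]
    ring
  have hmul : ∀ n : ℕ, gaussT^[n] z * (c (n+1) + gaussT^[n+1] z) = 1 := by
    intro n
    rw [← hrec n]
    exact mul_inv_cancel₀ (hz0 n)
  -- lower bound on |1/z_n|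
  have hw_lb : ∀ n, Real.sqrt 2 ≤ ‖(gaussT^[n] z)⁻¹‖ := by
    intro n
    rw [norm_inv]
    have h1 := habs n
    have h2 := habs_pos n
    have h3 : ‖gaussT^[n] z‖ * (‖gaussT^[n] z‖)⁻¹ = 1 :=
      mul_inv_cancel₀ (ne_of_gt h2)
    have h4 : 0 < (‖gaussT^[n] z‖)⁻¹ := inv_pos.mpr h2
    nlinarith
  -- integer components of the partial quotients
  have hcint : ∀ n : ℕ, ∃ a b : ℤ, c (n+1) = (a:ℂ) + (b:ℂ)*I := by
    intro n; rw [hc n]; exact hcf_ng_int _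
  -- partial quotients have norm ≥ 2
  have hcnorm : ∀ (n : ℕ) (a b : ℤ), c (n+1) = (a:ℂ) + (b:ℂ)*I → 2 ≤ a^2 + b^2 := by
    intro n a b hab
    by_contra hlt
    push_neg at hlt
    have hz1 : ‖(gaussT^[n] z)⁻¹ - c (n+1)‖ ≤ Real.sqrt 2/2 := by
      rw [hrec n]
      simpa using habs (n+1)
    have hlt1 : ‖(gaussT^[n] z)⁻¹ - c (n+1)‖ < 1 := by nlinarith
    rcases Nat.lt_or_ge 1 2 with _ | _
    · by_cases hab0 : a^2 + b^2 = 0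
      · have ha0 : a = 0 ∧ b = 0 := by constructor <;> nlinarith [sq_nonneg a, sq_nonneg b]
        have hc00 : c (n+1) = 0 := by rw [hab, ha0.1, ha0.2]; simp
        rw [hc00, sub_zero] at hz1
        have := hw_lb n
        nlinarith
      · have hab1 : a^2 + b^2 = 1 := by
          have h0 : 0 ≤ a^2 + b^2 := by positivity
          omega
        have hns : Complex.normSq (c (n+1)) = 1 := by
          rw [hab, hcf_normSq_intc]
          exact_mod_cast hab1
        have hgt := hcf_inv_near_unit (gaussT^[n] z) (c (n+1)) (hz0 n) hns hlt1
        have hle : ((c (n+1)) * (gaussT^[n] z)).re ≤ 1/2 := by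
          rw [hab]
          exact hcf_unit_re_le a b _ (hF n) hab1
        linarith
    · omega
  -- The key Hurwitz induction
  have key : ∀ m : ℕ,
      (∀ a b : ℤ, a^2 + b^2 = 2 →
        ‖(gaussT^[m] z)⁻¹ - ((a:ℂ)+(b:ℂ)*I)‖ < 1 →
        ‖contDen c (m+1)‖
          ≤ ‖contDen c m + ((a:ℂ)+(b:ℂ)*I) * contDen c (m+1)‖)
      ∧ ‖contDen c m‖ ≤ ‖contDen c (m+1)‖ := by
    intro m
    induction m with
    | zero =>
      constructor
      · intro a b hab _
        have e0 : contDen c 0 = 0 := rfl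
        have e1 : contDen c 1 = 1 := rfl
        rw [e0, e1, zero_add, mul_one]
        have h1 : ‖(a:ℂ)+(b:ℂ)*I‖ ^ 2 = 2 := by
          rw [Complex.sq_norm, hcf_normSq_intc]; exact_mod_cast hab
        have h2 := norm_nonneg ((a:ℂ)+(b:ℂ)*I)
        simp only [norm_one]
        nlinarith
      · have e0 : contDen c 0 = 0 := rfl
        have e1 : contDen c 1 = 1 := rfl
        rw [e0, e1]; simp
    | succ m ih =>
      obtain ⟨ihc, ihm⟩ := ih
      obtain ⟨A, B, hAB⟩ := hcint m
      have hABnorm : 2 ≤ A^2 + B^2 := hcnorm m A B hAB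
      have hcabs2 : ‖c (m+1)‖ ^ 2 = (A:ℝ)^2 + (B:ℝ)^2 := by
        rw [Complex.sq_norm, hAB, hcf_normSq_intc]
      have hDnonneg := norm_nonneg (contDen c m)
      have hD1nonneg := norm_nonneg (contDen c (m+1))
      have hD2def : contDen c (m+2) = c (m+1) * contDen c (m+1) + contDen c m := rfl
      -- triangle helper : |D m + s * D (m+1)| ≥ |s| |D(m+1)| - |D m|
      have htri : ∀ s : ℂ, ‖s‖ * ‖contDen c (m+1)‖ - ‖contDen c m‖
          ≤ ‖contDen c m + s * contDen c (m+1)‖ := by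
        intro s
        have h1 : ‖s * contDen c (m+1)‖
            ≤ ‖contDen c m + s * contDen c (m+1)‖ + ‖contDen c m‖ := by
          calc ‖s * contDen c (m+1)‖
              = ‖(contDen c m + s * contDen c (m+1)) + (-(contDen c m))‖ := by
                ring_nf
            _ ≤ _ := by
                have := norm_add_le
                  (contDen c m + s * contDen c (m+1)) (-(contDen c m))
                simpa using this
        rw [norm_mul] at h1
        linarith
      -- monotonicity at m+1
      have mono : ‖contDen c (m+1)‖ ≤ ‖contDen c (m+2)‖ := by
        rcases lt_or_ge (A^2 + B^2) 4 with h4 | h4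
        · -- norm exactly 2
          have hAB2 : A^2 + B^2 = 2 := by
            have ha : -1 ≤ A ∧ A ≤ 1 := by constructor <;> nlinarith [sq_nonneg A, sq_nonneg B]
            have hb : -1 ≤ B ∧ B ≤ 1 := by constructor <;> nlinarith [sq_nonneg A, sq_nonneg B]
            nlinarith [ha.1, ha.2, hb.1, hb.2]
          have hgeo : ‖(gaussT^[m] z)⁻¹ - ((A:ℂ)+(B:ℂ)*I)‖ < 1 := by
            rw [← hAB, hrec m]
            have := habs (m+1)
            have : ‖c (m+1) + gaussT^[m+1] z - c (m+1)‖ ≤ Real.sqrt 2 / 2 := by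
              simpa using habs (m+1)
            nlinarith [this]
          have h5 := ihc A B hAB2 hgeo
          rw [← hAB] at h5
          rw [hD2def]
          calc ‖contDen c (m+1)‖
              ≤ ‖contDen c m + c (m+1) * contDen c (m+1)‖ := h5
            _ = ‖c (m+1) * contDen c (m+1) + contDen c m‖ := by ring_nf
        · -- norm ≥ 4, so |c| ≥ 2
          have hca : 2 ≤ ‖c (m+1)‖ := by
            have h0 := norm_nonneg (c (m+1))
            have : (4:ℝ) ≤ (A:ℝ)^2 + (B:ℝ)^2 := by exact_mod_cast h4
            nlinarith [hcabs2]
          have h6 := htri (c (m+1))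
          rw [hD2def]
          have : ‖contDen c m + c (m+1) * contDen c (m+1)‖
              = ‖c (m+1) * contDen c (m+1) + contDen c m‖ := by ring_nf
          rw [this] at h6
          nlinarith
      refine ⟨?_, mono⟩
      -- claim at m+1
      intro a b hab hgeo
      have hvns : Complex.normSq ((a:ℂ)+(b:ℂ)*I) = 2 := by
        rw [hcf_normSq_intc]; exact_mod_cast hab
      -- push geometry down one level
      have h1 : ‖gaussT^[m+1] z - ((a:ℂ) - (b:ℂ)*I)‖ < 1 := by
        have h2 := hcf_inv_near_sqrt2 (gaussT^[m+1] z) _ (hz0 (m+1)) hvns hgeo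
        have h3 : (starRingEnd ℂ) ((a:ℂ)+(b:ℂ)*I) = (a:ℂ) - (b:ℂ)*I := by
          simp [map_add, map_mul, Complex.conj_I]
          ring
        rwa [h3] at h2
      have h2 : ‖(gaussT^[m] z)⁻¹ - (((A+a : ℤ):ℂ) + ((B-b : ℤ):ℂ)*I)‖ < 1 := by
        have e : (gaussT^[m] z)⁻¹ - (((A+a : ℤ):ℂ) + ((B-b : ℤ):ℂ)*I)
            = gaussT^[m+1] z - ((a:ℂ) - (b:ℂ)*I) := by
          rw [hrec m, hAB]; push_cast; ring
        rw [e]; exact h1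
      -- the shifted statement
      have hstep : ‖contDen c (m+1)‖
          ≤ ‖contDen c m + (((A+a : ℤ):ℂ) + ((B-b : ℤ):ℂ)*I) * contDen c (m+1)‖ := by
        rcases lt_or_ge ((A+a)^2 + (B-b)^2) 4 with h4 | h4
        · have hb1 : -1 ≤ A+a ∧ A+a ≤ 1 := by
            constructor <;> nlinarith [sq_nonneg (A+a), sq_nonneg (B-b)]
          have hb2 : -1 ≤ B-b ∧ B-b ≤ 1 := by
            constructor <;> nlinarith [sq_nonneg (A+a), sq_nonneg (B-b)]
          have hle2 : (A+a)^2 + (B-b)^2 ≤ 2 := by nlinarith [hb1.1, hb1.2, hb2.1, hb2.2]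
          by_cases hcase0 : (A+a)^2 + (B-b)^2 = 0
          · -- s = 0 : contradiction with |w| ≥ √2
            exfalso
            have hz2 : A+a = 0 ∧ B-b = 0 := by
              constructor <;> nlinarith [sq_nonneg (A+a), sq_nonneg (B-b)]
            rw [hz2.1, hz2.2] at h2
            simp only [Int.cast_zero, Complex.ofReal_zero, zero_mul, add_zero, sub_zero] at h2
            have := hw_lb m
            nlinarith [h2, this]
          · by_cases hcase1 : (A+a)^2 + (B-b)^2 = 1
            · -- s a unit : contradiction with fundamental domain
              exfalso
              have hns : Complex.normSq (((A+a : ℤ):ℂ) + ((B-b : ℤ):ℂ)*I) = 1 := by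
                rw [hcf_normSq_intc]; exact_mod_cast hcase1
              have hgt := hcf_inv_near_unit (gaussT^[m] z) _ (hz0 m) hns h2
              have hle := hcf_unit_re_le (A+a) (B-b) _ (hF m) hcase1
              linarith
            · -- s of norm 2 : use induction hypothesis
              have hcase2 : (A+a)^2 + (B-b)^2 = 2 := by
                have h0 : 0 ≤ (A+a)^2 + (B-b)^2 := by positivity
                omega
              exact ihc (A+a) (B-b) hcase2 h2
        · -- |s| ≥ 2
          have hsabs : 2 ≤ ‖((A+a : ℤ):ℂ) + ((B-b : ℤ):ℂ)*I‖ := by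
            have h5 : ‖((A+a : ℤ):ℂ) + ((B-b : ℤ):ℂ)*I‖ ^2
                = ((A+a : ℤ):ℝ)^2 + ((B-b : ℤ):ℝ)^2 := by
              rw [Complex.sq_norm, hcf_normSq_intc]
            have h6 : (4:ℝ) ≤ ((A+a : ℤ):ℝ)^2 + ((B-b : ℤ):ℝ)^2 := by exact_mod_cast h4
            have h0 := norm_nonneg (((A+a : ℤ):ℂ) + ((B-b : ℤ):ℂ)*I)
            nlinarith
          have h7 := htri (((A+a : ℤ):ℂ) + ((B-b : ℤ):ℂ)*I)
          nlinarith
      -- transfer back using the key identity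
      have hid := hcf_key_identity (contDen c (m+1)) (contDen c (m+2)) ((a:ℂ)+(b:ℂ)*I) hvns
      have hrw : contDen c (m+2) + (starRingEnd ℂ) ((a:ℂ)+(b:ℂ)*I) * contDen c (m+1)
          = contDen c m + (((A+a : ℤ):ℂ) + ((B-b : ℤ):ℂ)*I) * contDen c (m+1) := by
        rw [hD2def, hAB]
        have h3 : (starRingEnd ℂ) ((a:ℂ)+(b:ℂ)*I) = (a:ℂ) - (b:ℂ)*I := by
          simp [map_add, map_mul, Complex.conj_I]
          ring
        rw [h3]; push_cast; ring
      rw [hrw] at hid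
      have h8 : Complex.normSq (contDen c (m+1)) ≤ Complex.normSq
          (contDen c m + (((A+a : ℤ):ℂ) + ((B-b : ℤ):ℂ)*I) * contDen c (m+1)) := by
        rw [← Complex.sq_norm, ← Complex.sq_norm]
        have h0 := norm_nonneg (contDen c (m+1))
        nlinarith [hstep]
      have h9 : Complex.normSq (contDen c (m+2)) ≤ Complex.normSq
          (contDen c (m+1) + ((a:ℂ)+(b:ℂ)*I) * contDen c (m+2)) := by linarith
      rw [← Complex.sq_norm, ← Complex.sq_norm] at h9
      have h0 := norm_nonneg (contDen c (m+2))
      have h0' := norm_nonneg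
        (contDen c (m+1) + ((a:ℂ)+(b:ℂ)*I) * contDen c (m+2))
      nlinarith
  -- denominators have absolute value ≥ 1
  have hq1 : ∀ m : ℕ, 1 ≤ ‖contDen c (m+1)‖ := by
    intro m
    induction m with
    | zero =>
      have e1 : contDen c 1 = 1 := rfl
      rw [e1]; simp
    | succ k ih => exact le_trans ih (key (k+1)).2
  -- determinant identity
  have hdet : ∀ m : ℕ, contNum c m * contDen c (m+1) - contNum c (m+1) * contDen c m
      = (-1 : ℂ)^m := by
    intro m
    induction m with
    | zero =>
      have e0 : contDen c 0 = 0 := rfl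
      have e1 : contDen c 1 = 1 := rfl
      have e2 : contNum c 0 = 1 := rfl
      rw [e0, e1, e2]; simp
    | succ k ih =>
      have eN : contNum c (k+2) = c (k+1) * contNum c (k+1) + contNum c k := rfl
      have eD : contDen c (k+2) = c (k+1) * contDen c (k+1) + contDen c k := rfl
      rw [eN, eD, pow_succ]
      linear_combination (-1 : ℂ) * ih
  -- the fundamental identity  ζ (q_n + z_n q_{n-1}) = p_n + z_n p_{n-1}
  have hzeta : ∀ n : ℕ, ζ * (contDen c (n+1) + gaussT^[n] z * contDen c n)
      = contNum c (n+1) + gaussT^[n] z * contNum c n := by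
    intro n
    induction n with
    | zero =>
      have e0 : contDen c 0 = 0 := rfl
      have e1 : contDen c 1 = 1 := rfl
      have e2 : contNum c 0 = 1 := rfl
      have e3 : contNum c 1 = c 0 := rfl
      rw [e0, e1, e2, e3, Function.iterate_zero_apply]
      rw [hz]; ring
    | succ k ih =>
      have eN : contNum c (k+2) = c (k+1) * contNum c (k+1) + contNum c k := rfl
      have eD : contDen c (k+2) = c (k+1) * contDen c (k+1) + contDen c k := rfl
      have hm := hmul k
      have e4 : gaussT^[k] z * (contDen c (k+2) + gaussT^[k+1] z * contDen c (k+1))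
          = contDen c (k+1) + gaussT^[k] z * contDen c k := by
        rw [eD]; linear_combination contDen c (k+1) * hm
      have e5 : gaussT^[k] z * (contNum c (k+2) + gaussT^[k+1] z * contNum c (k+1))
          = contNum c (k+1) + gaussT^[k] z * contNum c k := by
        rw [eN]; linear_combination contNum c (k+1) * hm
      have e6 : gaussT^[k] z * (ζ * (contDen c (k+2) + gaussT^[k+1] z * contDen c (k+1))
          - (contNum c (k+2) + gaussT^[k+1] z * contNum c (k+1))) = 0 := by
        linear_combination ζ * e4 - e5 + ih
      rcases mul_eq_zero.mp e6 with h | h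
      · exact absurd h (hz0 k)
      · exact sub_eq_zero.mp h
  refine ⟨hz0, ?_⟩
  intro n _
  -- real abbreviations
  set q : ℝ := ‖contDen c (n+1)‖ with hqdef
  set q' : ℝ := ‖contDen c n‖ with hq'def
  set t : ℝ := ‖gaussT^[n] z‖ with htdef
  set aa : ℝ := ‖c (n+1)‖ with haadef
  set d : ℝ := ‖contDen c (n+1) + gaussT^[n] z * contDen c n‖ with hddef
  set E : ℝ := ‖ζ - contNum c (n+1) / contDen c (n+1)‖ with hEdef
  have hq : 1 ≤ q := hq1 n
  have hQ0 : contDen c (n+1) ≠ 0 := by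
    intro h
    rw [hqdef, h] at hq
    simp at hq
    linarith
  have hq'le : q' ≤ q := (key n).2
  have ht : 0 < t := habs_pos n
  have htu : t ≤ Real.sqrt 2 / 2 := habs n
  have hEnn : 0 ≤ E := norm_nonneg _
  have hq'nn : 0 ≤ q' := norm_nonneg _
  -- bounds on d
  have t1 : ‖gaussT^[n] z * contDen c n‖ ≤ Real.sqrt 2 / 2 * q := by
    rw [norm_mul, ← htdef, ← hq'def]
    exact mul_le_mul htu hq'le hq'nn (by positivity)
  have t2 : q ≤ d + Real.sqrt 2 / 2 * q := by
    have h1 : ‖contDen c (n+1)‖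
        ≤ ‖contDen c (n+1) + gaussT^[n] z * contDen c n‖
          + ‖gaussT^[n] z * contDen c n‖ := by
      calc ‖contDen c (n+1)‖
          = ‖(contDen c (n+1) + gaussT^[n] z * contDen c n)
              + (-(gaussT^[n] z * contDen c n))‖ := by ring_nf
        _ ≤ _ := by
            have := norm_add_le
              (contDen c (n+1) + gaussT^[n] z * contDen c n) (-(gaussT^[n] z * contDen c n))
            simpa using this
    rw [← hqdef, ← hddef] at h1
    linarith
  have t3 : d ≤ q + Real.sqrt 2 / 2 * q := by
    have h1 := norm_add_le (contDen c (n+1)) (gaussT^[n] z * contDen c n)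
    rw [← hqdef, ← hddef] at h1
    linarith
  have hd_lb : q * (2 - Real.sqrt 2) / 2 ≤ d := by linarith
  have hd_ub : d ≤ q * (2 + Real.sqrt 2) / 2 := by linarith
  have hd_pos : 0 < d := by nlinarith
  have hDn0 : contDen c (n+1) + gaussT^[n] z * contDen c n ≠ 0 := by
    intro h
    rw [hddef, h] at hd_pos
    simp at hd_pos
  -- bounds relating t and aa
  have haa : Real.sqrt 2 ≤ aa := by
    obtain ⟨a, b, hab⟩ := hcint n
    have h2 := hcnorm n a b hab
    have h3 : aa ^ 2 = (a:ℝ)^2 + (b:ℝ)^2 := by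
      rw [haadef, Complex.sq_norm, hab, hcf_normSq_intc]
    have h4 : (2:ℝ) ≤ (a:ℝ)^2 + (b:ℝ)^2 := by exact_mod_cast h2
    have h5 : 0 ≤ aa := norm_nonneg _
    nlinarith
  have haapos : 0 < aa := lt_of_lt_of_le hs2 haa
  have hcz : t * ‖c (n+1) + gaussT^[n+1] z‖ = 1 := by
    rw [htdef, ← norm_mul, hmul n, norm_one]
  have hcz_lb : aa - Real.sqrt 2 / 2 ≤ ‖c (n+1) + gaussT^[n+1] z‖ := by
    have h1 : ‖c (n+1)‖
        ≤ ‖c (n+1) + gaussT^[n+1] z‖ + ‖gaussT^[n+1] z‖ := by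
      calc ‖c (n+1)‖
          = ‖(c (n+1) + gaussT^[n+1] z) + (-(gaussT^[n+1] z))‖ := by ring_nf
        _ ≤ _ := by
            have := norm_add_le (c (n+1) + gaussT^[n+1] z) (-(gaussT^[n+1] z))
            simpa using this
    have h2 := habs (n+1)
    rw [← haadef] at h1
    linarith
  have hcz_ub : ‖c (n+1) + gaussT^[n+1] z‖ ≤ aa + Real.sqrt 2 / 2 := by
    have h1 := norm_add_le (c (n+1)) (gaussT^[n+1] z)
    have h2 := habs (n+1)
    rw [← haadef] at h1
    linarith
  have hta1 : t * (aa - Real.sqrt 2 / 2) ≤ 1 := by nlinarith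
  have hta2 : 1 ≤ t * (aa + Real.sqrt 2 / 2) := by nlinarith
  have hta3 : t * aa ≤ 3/2 := by nlinarith
  -- the error identity
  have hkey : (ζ - contNum c (n+1) / contDen c (n+1))
      * (contDen c (n+1) * (contDen c (n+1) + gaussT^[n] z * contDen c n))
      = gaussT^[n] z * (-1)^n := by
    have expand : (ζ - contNum c (n+1) / contDen c (n+1))
        * (contDen c (n+1) * (contDen c (n+1) + gaussT^[n] z * contDen c n))
        = ζ * (contDen c (n+1) + gaussT^[n] z * contDen c n) * contDen c (n+1)
          - contNum c (n+1) * (contDen c (n+1) + gaussT^[n] z * contDen c n) := by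
      field_simp
    rw [expand]
    linear_combination contDen c (n+1) * hzeta n + gaussT^[n] z * hdet n
  have habseq : E * (q * d) = t := by
    have h := congrArg norm hkey
    rw [norm_mul, norm_mul, norm_mul, norm_pow] at h
    simpa [hEdef, hqdef, hddef, htdef] using h
  -- final inequalities
  refine ⟨hQ0, ?_, ?_⟩
  · -- lower bound
    rw [div_mul_div_comm, div_le_iff₀ (by positivity)]
    have k1 : (2 + Real.sqrt 2) * q * 1 ≤ (2 + Real.sqrt 2) * q * (t * (aa + Real.sqrt 2/2)) := by
      nlinarith
    have k2 : 2 * d ≤ (2 + Real.sqrt 2) * q := by linarith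
    have k3 : 2 * d ≤ (E * ((2 + Real.sqrt 2) * (q^2 * (aa + Real.sqrt 2/2)))) * d := by
      nlinarith [habseq]
    have := le_of_mul_le_mul_right (by linarith : 2 * d ≤ (E * ((2 + Real.sqrt 2) * (q^2 * (aa + Real.sqrt 2/2)))) * d) hd_pos
    nlinarith [k3, hd_pos]
  · -- upper bound
    rw [div_mul_div_comm, le_div_iff₀ (mul_pos (by linarith) (mul_pos haapos (pow_pos (by linarith) 2)))]
    have k4 : (E * ((2 - Real.sqrt 2) * (aa * q^2))) * d ≤ (4 * 1) * d := by
      have k5 : (E * ((2 - Real.sqrt 2) * (aa * q^2))) * d = t * (2 - Real.sqrt 2) * aa * q := by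
        linear_combination (2 - Real.sqrt 2) * aa * q * habseq
      rw [k5]
      have k6 : t * aa * ((2 - Real.sqrt 2) * q) ≤ (3/2) * ((2 - Real.sqrt 2) * q) :=
        mul_le_mul_of_nonneg_right hta3 (by nlinarith)
      nlinarith [hd_lb]
    exact le_of_mul_le_mul_right k4 hd_pos
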